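/- Let p, q be relatively prime positive integers and let A(t), B(t) be polynomials with nonnegative coefficients, nonzero constant terms, satisfying A(t)·ξ_q(t) = B(t)·ξ_p(t). Write A(t) = Σ_{a=0}^{p-1} Σ_b α_{a,b} t^{aq - bp} and for each a let λ_{p-1-a} = max{b : α_{a,b} ≠ 0}. Then the sequence λ_0, λ_1, ..., λ_{p-1} is weakly decreasing (i.e., a partition) with λ_{p-1} = 0. -/
import Mathlib

open Polynomial

noncomputable def xi (d : ℕ) : Polynomial ℤ := ∑ k ∈ Finset.range d, X ^ k

def coeffZ (P : Polynomial ℤ) (j : ℤ) : ℤ := if 0 ≤ j then P.coeff j.toNat else 0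

lemma coeffZ_nonneg {P : Polynomial ℤ} (hP : ∀ n, 0 ≤ P.coeff n) (j : ℤ) :
    0 ≤ coeffZ P j := by
  unfold coeffZ; split
  · exact hP _
  · exact le_refl _

lemma coeffZ_ne_zero_nonneg {P : Polynomial ℤ} {j : ℤ} (h : coeffZ P j ≠ 0) : 0 ≤ j := by
  by_contra hj
  exact h (by unfold coeffZ; rw [if_neg hj])

lemma coeffZ_mul_sub (P : Polynomial ℤ) (d : ℕ) (n : ℤ) :
    coeffZ (P * (X ^ d - 1)) n = coeffZ P (n - d) - coeffZ P n := by
  unfold coeffZ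
  by_cases hn : 0 ≤ n
  · rw [if_pos hn, mul_sub, mul_one, coeff_sub, coeff_mul_X_pow']
    by_cases hd : 0 ≤ n - (d : ℤ)
    · rw [if_pos hd, if_pos (by omega : d ≤ n.toNat), if_pos hn]
      congr 2
      omega
    · rw [if_neg hd, if_neg (by omega : ¬ d ≤ n.toNat), if_pos hn]
  · rw [if_neg hn, if_neg (by omega : ¬ (0:ℤ) ≤ n - d), if_neg hn]
    ring

lemma key_lemma (p q : ℕ) (hp : 0 < p) (A B : Polynomial ℤ)
    (hA : ∀ n, 0 ≤ A.coeff n) (hB : ∀ n, 0 ≤ B.coeff n)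
    (hrec : ∀ n : ℤ, coeffZ A (n - q) - coeffZ A n = coeffZ B (n - p) - coeffZ B n)
    (N : ℤ) (hN : coeffZ A N ≠ 0)
    (hmax : ∀ i : ℤ, 1 ≤ i → coeffZ A (N - i * p) = 0)
    (hvan : ∀ i : ℤ, 0 ≤ i → coeffZ A (N + q - i * p) = 0) : False := by
  have hAN : 0 < coeffZ A N :=
    lt_of_le_of_ne (coeffZ_nonneg hA N) (Ne.symm hN)
  have step : ∀ k : ℕ, coeffZ B (N + q) = coeffZ B (N + q - ((k : ℤ) + 1) * p) - coeffZ A N := by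
    intro k
    induction k with
    | zero =>
      have h1 := hrec (N + q)
      have h2 : coeffZ A (N + q) = 0 := by
        have := hvan 0 le_rfl
        simpa using this
      have h3 : N + q - (q : ℤ) = N := by ring
      have h4 : N + q - (((0:ℕ) : ℤ) + 1) * p = N + q - p := by push_cast; ring
      rw [h3, h2] at h1
      rw [h4]
      linarith
    | succ k ih =>
      have h1 := hrec (N + q - ((k : ℤ) + 1) * p)
      have e1 : N + q - ((k : ℤ) + 1) * p - q = N - ((k : ℤ) + 1) * p := by ring
      have e2 : N + q - ((k : ℤ) + 1) * p - p = N + q - (((k : ℕ) + 1 : ℤ) + 1) * p := by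
        ring
      have h2 : coeffZ A (N - ((k : ℤ) + 1) * p) = 0 := hmax _ (by omega)
      have h3 : coeffZ A (N + q - ((k : ℤ) + 1) * p) = 0 := hvan _ (by omega)
      rw [e1, e2, h2, h3] at h1
      have e3 : (((k + 1 : ℕ) : ℤ) + 1) = ((k : ℤ) + 1) + 1 := by push_cast; ring
      rw [ih, e3]
      linarith
  set k : ℕ := (N + q).toNat with hk
  have hneg : N + q - ((k : ℤ) + 1) * p < 0 := by
    have h1 : N + q ≤ (k : ℤ) := Int.self_le_toNat (N + q)
    have h2 : (k : ℤ) + 1 ≤ ((k : ℤ) + 1) * p := by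
      nlinarith [Int.ofNat_le.mpr hp]
    omega
  have hz : coeffZ B (N + q - ((k : ℤ) + 1) * p) = 0 := by
    unfold coeffZ; rw [if_neg (by omega)]
  have := step k
  rw [hz] at this
  have hBpos : 0 ≤ coeffZ B (N + q) := coeffZ_nonneg hB _
  linarith

theorem stmt7 (p q : ℕ) (hp : 0 < p) (hq : 0 < q) (hpq : Nat.Coprime p q)
    (A B : Polynomial ℤ)
    (hA : ∀ n, 0 ≤ A.coeff n) (hB : ∀ n, 0 ≤ B.coeff n)
    (hA0 : A.coeff 0 ≠ 0) (hB0 : B.coeff 0 ≠ 0)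
    (h : A * xi q = B * xi p) :
    ∃ lam : ℕ → ℤ,
      (∀ a < p,
        coeffZ A ((a : ℤ) * q - lam (p - 1 - a) * p) ≠ 0 ∧
        ∀ b : ℤ, coeffZ A ((a : ℤ) * q - b * p) ≠ 0 → b ≤ lam (p - 1 - a)) ∧
      (∀ j : ℕ, j + 1 < p → lam (j + 1) ≤ lam j) ∧
      lam (p - 1) = 0 := by
  -- the recurrence
  have hX : A * ((X : Polynomial ℤ) ^ q - 1) = B * (X ^ p - 1) := by
    have h1 := congrArg (· * ((X : Polynomial ℤ) - 1)) h
    simpa [xi, mul_assoc, geom_sum_mul] using h1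
  have hrec : ∀ n : ℤ, coeffZ A (n - q) - coeffZ A n = coeffZ B (n - p) - coeffZ B n := by
    intro n
    have := congrArg (fun P => coeffZ P n) hX
    simpa [coeffZ_mul_sub] using this
  -- the sets
  set S : ℕ → ℤ → Prop := fun a b => coeffZ A ((a : ℤ) * q - b * p) ≠ 0 with hS
  have hbdd : ∀ a : ℕ, ∀ b : ℤ, S a b → b ≤ (a : ℤ) * q := by
    intro a b hb
    have h1 : 0 ≤ (a : ℤ) * q - b * p := coeffZ_ne_zero_nonneg hb
    have hp1 : (1 : ℤ) ≤ p := by exact_mod_cast hp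
    nlinarith [mul_nonneg (Int.ofNat_nonneg a) (Int.ofNat_nonneg q)]
  have hA0' : coeffZ A 0 ≠ 0 := by
    unfold coeffZ; simpa using hA0
  have hS0 : ∀ a : ℕ, S a 0 → True := fun _ _ => trivial
  -- nonemptiness and existence of greatest element
  have hgreat : ∀ a : ℕ, ∃ b : ℤ, S a b ∧ ∀ b' : ℤ, S a b' → b' ≤ b := by
    intro a
    induction a with
    | zero =>
      refine ⟨0, ?_, ?_⟩
      · show coeffZ A ((0:ℤ) * q - 0 * p) ≠ 0
        simpa using hA0'
      · intro b' hb'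
        have h1 : 0 ≤ ((0:ℕ) : ℤ) * q - b' * p := coeffZ_ne_zero_nonneg hb'
        simp only [Nat.cast_zero, zero_mul, zero_sub] at h1
        by_contra hgt
        push_neg at hgt
        have h2 : 0 < b' * p := mul_pos hgt (by exact_mod_cast hp)
        linarith
    | succ a ih =>
      obtain ⟨b0, hb0, hb0max⟩ := ih
      by_contra hcon
      -- then S (a+1) is empty: otherwise a greatest element exists by bddness
      have hempty : ∀ b : ℤ, ¬ S (a + 1) b := by
        intro b hb
        obtain ⟨lub, hlub1, hlub2⟩ := Int.exists_greatest_of_bdd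
          ⟨(a + 1 : ℕ) * q, fun z hz => hbdd (a+1) z hz⟩ ⟨b, hb⟩
        exact hcon ⟨lub, hlub1, hlub2⟩
      refine key_lemma p q hp A B hA hB hrec ((a : ℤ) * q - b0 * p) hb0 ?_ ?_
      · intro i hi
        by_contra hne
        have : S a (b0 + i) := by
          show coeffZ A ((a : ℤ) * q - (b0 + i) * p) ≠ 0
          intro hz; apply hne
          rw [← hz]; ring_nf
        have := hb0max _ this
        omega
      · intro i hi
        by_contra hne
        apply hempty (b0 + i)
        show coeffZ A (((a:ℕ) + 1 : ℤ) * q - (b0 + i) * p) ≠ 0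
        intro hz; apply hne
        rw [← hz]; push_cast; ring_nf
  choose M hM hMmax using hgreat
  -- monotonicity: M a ≤ M (a + 1)
  have hmono : ∀ a : ℕ, M a ≤ M (a + 1) := by
    intro a
    by_contra hcon
    push_neg at hcon
    refine key_lemma p q hp A B hA hB hrec ((a : ℤ) * q - M a * p) (hM a) ?_ ?_
    · intro i hi
      by_contra hne
      have : S a (M a + i) := by
        show coeffZ A ((a : ℤ) * q - (M a + i) * p) ≠ 0
        intro hz; apply hne; rw [← hz]; ring_nf
      have := hMmax a _ this
      omega
    · intro i hi
      by_contra hne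
      have : S (a+1) (M a + i) := by
        show coeffZ A (((a:ℕ) + 1 : ℤ) * q - (M a + i) * p) ≠ 0
        intro hz; apply hne; rw [← hz]; push_cast; ring_nf
      have := hMmax (a+1) _ this
      omega
  have hM0 : M 0 = 0 := by
    have h1 : M 0 ≤ 0 := by
      have := hM 0
      have h2 : 0 ≤ ((0:ℕ) : ℤ) * q - M 0 * p := coeffZ_ne_zero_nonneg this
      simp only [Nat.cast_zero, zero_mul, zero_sub] at h2
      by_contra hgt
      push_neg at hgt
      have h3 : 0 < M 0 * p := mul_pos hgt (by exact_mod_cast hp)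
      linarith
    have h2 : 0 ≤ M 0 := by
      apply hMmax 0
      show coeffZ A ((0:ℤ) * q - 0 * p) ≠ 0
      simpa using hA0'
    omega
  refine ⟨fun j => M (p - 1 - j), ?_, ?_, ?_⟩
  · intro a ha
    have e : p - 1 - (p - 1 - a) = a := by omega
    dsimp only
    rw [e]
    exact ⟨hM a, hMmax a⟩
  · intro j hj
    have e1 : p - 1 - (j + 1) = p - 2 - j := by omega
    have e2 : p - 1 - j = (p - 2 - j) + 1 := by omega
    dsimp only
    rw [e1, e2]
    exact hmono (p - 2 - j)
  · have e : p - 1 - (p - 1) = 0 := by omega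
    dsimp only
    rw [e, hM0]
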